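/- Consider the constrained linear system x_{k+1} = A x_k + B u_k with closed convex sets 𝕏 ⊆ ℝ^{n_x}, 𝕌 ⊆ ℝ^{n_u}, (0,0) ∈ 𝕏 × 𝕌, rank(B) = n_u ≤ n_x, and a stage cost L : ℝ^{n_x}×ℝ^{n_u} → ℝ that is convex, non-negative, L(0,0) = 0, and positive definite. Let X ⊆ 𝕏 be a compact convex λ-control invariant set with 0 ∈ X and 0 ≤ λ < 1. Then there exists at least one L-CLF M with dom(M) = X, i.e., the set ℳ(X) is non-empty. -/

import Mathlib

open Matrix Set MeasureTheory
open scoped Classical Pointwise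

noncomputable section

def epiF {nx : ℕ} (M : (Fin nx → ℝ) → EReal) : Set ((Fin nx → ℝ) × ℝ) :=
  {p | M p.1 ≤ (p.2 : EReal)}

def domF {nx : ℕ} (M : (Fin nx → ℝ) → EReal) : Set (Fin nx → ℝ) :=
  {x | M x < ⊤}

def ProperCompactConvex {nx : ℕ} (M : (Fin nx → ℝ) → EReal) : Prop :=
  (∀ x, M x ≠ ⊥) ∧ (domF M).Nonempty ∧ IsCompact (domF M) ∧
    IsClosed (epiF M) ∧ Convex ℝ (epiF M)

def Pset {nx f : ℕ} (G : Matrix (Fin f) (Fin nx) ℝ) (h : Fin f → ℝ)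
    (z : Fin f → ℝ) : Set ((Fin nx → ℝ) × ℝ) :=
  {p | ∀ i, (G *ᵥ p.1) i + h i * p.2 ≤ z i}

def Kcone (nx : ℕ) : Set ((Fin nx → ℝ) × ℝ) := {p | p.1 = 0 ∧ 0 ≤ p.2}

def vertPt {nx f : ℕ} (R : Matrix (Fin nx) (Fin f) ℝ) (s : Fin f → ℝ)
    (z : Fin f → ℝ) : (Fin nx → ℝ) × ℝ := (R *ᵥ z, s ⬝ᵥ z)

def ConfigTriplet {nx f e v : ℕ} (G : Matrix (Fin f) (Fin nx) ℝ) (h : Fin f → ℝ)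
    (E : Matrix (Fin e) (Fin f) ℝ)
    (R : Fin v → Matrix (Fin nx) (Fin f) ℝ) (s : Fin v → Fin f → ℝ) : Prop :=
  ∀ z : Fin f → ℝ,
    Pset G h z = convexHull ℝ (Set.range fun i => vertPt (R i) (s i) z) + Kcone nx
      ↔ ∀ i, (E *ᵥ z) i ≤ 0

def PolyFamily {nx f e : ℕ} (G : Matrix (Fin f) (Fin nx) ℝ) (h : Fin f → ℝ)
    (E : Matrix (Fin e) (Fin f) ℝ) : Set (Set ((Fin nx → ℝ) × ℝ)) :=
  {P | ∃ z : Fin f → ℝ, (∀ i, (E *ᵥ z) i ≤ 0) ∧ P = Pset G h z}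

def indE {n : ℕ} (S : Set (Fin n → ℝ)) (x : Fin n → ℝ) : EReal :=
  if x ∈ S then 0 else ⊤

def IsLCLF {nx nu : ℕ} (A : Matrix (Fin nx) (Fin nx) ℝ) (B : Matrix (Fin nx) (Fin nu) ℝ)
    (𝕏 : Set (Fin nx → ℝ)) (𝕌 : Set (Fin nu → ℝ))
    (L : (Fin nx → ℝ) → (Fin nu → ℝ) → ℝ) (M : (Fin nx → ℝ) → EReal) : Prop :=
  M 0 = 0 ∧ (∀ x, x ≠ 0 → 0 < M x) ∧ ProperCompactConvex M ∧
    ∀ x, (⨅ u ∈ 𝕌, ((L x u : EReal) + indE 𝕏 x + M (A *ᵥ x + B *ᵥ u))) ≤ M x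

def RobustCLF {nx nu : ℕ}
    (𝔻 : Set (Matrix (Fin nx) (Fin nx) ℝ × Matrix (Fin nx) (Fin nu) ℝ × (Fin nx → ℝ)))
    (𝕏 : Set (Fin nx → ℝ)) (𝕌 : Set (Fin nu → ℝ))
    (L : (Fin nx → ℝ) → (Fin nu → ℝ) → ℝ) (M : (Fin nx → ℝ) → EReal) : Prop :=
  (∀ x, 0 ≤ M x) ∧ ProperCompactConvex M ∧ (∃ xs ∈ 𝕏, M xs = 0) ∧
    ∀ x, (⨅ u ∈ 𝕌, ⨆ d ∈ 𝔻,
      ((L x u : EReal) + indE 𝕏 x + M (d.1 *ᵥ x + d.2.1 *ᵥ u + d.2.2))) ≤ M x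

def IsRCI {nx nu : ℕ}
    (𝔻 : Set (Matrix (Fin nx) (Fin nx) ℝ × Matrix (Fin nx) (Fin nu) ℝ × (Fin nx → ℝ)))
    (𝕏 : Set (Fin nx → ℝ)) (𝕌 : Set (Fin nu → ℝ)) (X : Set (Fin nx → ℝ)) : Prop :=
  X ⊆ 𝕏 ∧ IsCompact X ∧ Convex ℝ X ∧
    ∀ x ∈ X, ∃ u ∈ 𝕌, ∀ d ∈ 𝔻, d.1 *ᵥ x + d.2.1 *ᵥ u + d.2.2 ∈ X

def LPSDwrt {nx nu : ℕ}
    (𝔻 : Set (Matrix (Fin nx) (Fin nx) ℝ × Matrix (Fin nx) (Fin nu) ℝ × (Fin nx → ℝ)))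
    (𝕌 : Set (Fin nu → ℝ)) (L : (Fin nx → ℝ) → (Fin nu → ℝ) → ℝ)
    (Xs : Set (Fin nx → ℝ)) : Prop :=
  ∀ x ∈ Xs, ∃ u ∈ 𝕌, L x u = 0 ∧ ∀ d ∈ 𝔻, d.1 *ᵥ x + d.2.1 *ᵥ u + d.2.2 ∈ Xs

def RobustLambdaContractive {nx nu : ℕ}
    (𝔻 : Set (Matrix (Fin nx) (Fin nx) ℝ × Matrix (Fin nx) (Fin nu) ℝ × (Fin nx → ℝ)))
    (𝕌 : Set (Fin nu → ℝ)) (Xs : Set (Fin nx → ℝ)) (lam : ℝ)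
    (X : Set (Fin nx → ℝ)) : Prop :=
  ∀ x ∈ X, ∃ u ∈ 𝕌, ∀ d ∈ 𝔻,
    d.1 *ᵥ x + d.2.1 *ᵥ u + d.2.2 ∈ lam • X + (1 - lam) • Xs

def Jcost {nx nu : ℕ} (A : Matrix (Fin nx) (Fin nx) ℝ) (B : Matrix (Fin nx) (Fin nu) ℝ)
    (𝕌 : Set (Fin nu → ℝ)) (X : Set (Fin nx → ℝ))
    (L : (Fin nx → ℝ) → (Fin nu → ℝ) → ℝ) (M : (Fin nx → ℝ) → EReal)
    (N : ℕ) (x0 : Fin nx → ℝ) : EReal :=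
  sInf {c : EReal | ∃ (xs : ℕ → (Fin nx → ℝ)) (us : ℕ → (Fin nu → ℝ)),
    xs 0 = x0 ∧
    (∀ k < N, us k ∈ 𝕌 ∧ xs k ∈ X ∧ xs (k + 1) = A *ᵥ xs k + B *ᵥ us k) ∧
    c = ((∑ k ∈ Finset.range N, L (xs k) (us k) : ℝ) : EReal) + M (xs N)}

def Dij {nx nu f : ℕ} (G : Matrix (Fin f) (Fin nx) ℝ)
    (𝔻 : Set (Matrix (Fin nx) (Fin nx) ℝ × Matrix (Fin nx) (Fin nu) ℝ × (Fin nx → ℝ)))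
    (xi : Fin nx → ℝ) (c : Fin nu → ℝ) (j : Fin f) : ℝ :=
  sSup ((fun d : Matrix (Fin nx) (Fin nx) ℝ × Matrix (Fin nx) (Fin nu) ℝ × (Fin nx → ℝ) =>
    (G *ᵥ (d.1 *ᵥ xi + d.2.1 *ᵥ c + d.2.2)) j) '' 𝔻)

section HelperLemmas


variable {E : Type*} [NormedAddCommGroup E] [NormedSpace ℝ E]

/-- attainment of the gauge for compact sets -/
lemma gauge_attained' {X : Set E} (hXc : IsClosed X) (hXb : Bornology.IsBounded X)
    (h0 : (0:E) ∈ X) {x : E} (hx : x ∈ X) : x ∈ gauge X x • X := by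
  set S : Set ℝ := {r ∈ Set.Ioi (0:ℝ) | x ∈ r • X} with hS
  have hSne : S.Nonempty := ⟨1, by simp [hS], by simpa using hx⟩
  have hSbdd : BddBelow S := ⟨0, fun t ht => le_of_lt ht.1⟩
  have hg : gauge X x = sInf S := gauge_def
  rcases eq_or_lt_of_le (gauge_nonneg (s := X) x) with h0g | h0g
  · -- gauge = 0 : show x = 0
    obtain ⟨R, hR⟩ := hXb.subset_closedBall 0
    have hx0 : x = 0 := by
      have hnorm : ∀ ε > (0:ℝ), ‖x‖ ≤ ε := by
        intro ε hε
        have hR1 : (0:ℝ) < max R 1 := lt_max_of_lt_right one_pos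
        have hlt : sInf S < ε / max R 1 := by
          rw [← hg, ← h0g]; positivity
        obtain ⟨t, htS, htlt⟩ := exists_lt_of_csInf_lt hSne hlt
        obtain ⟨z, hz, hzx⟩ := htS.2
        have hzn : ‖z‖ ≤ max R 1 := by
          have := hR hz
          simp only [Metric.mem_closedBall, dist_zero_right] at this
          exact this.trans (le_max_left _ _)
        have hxn : ‖x‖ = t * ‖z‖ := by
          rw [← hzx, norm_smul, Real.norm_of_nonneg (le_of_lt htS.1)]
        rw [hxn]
        calc t * ‖z‖ ≤ (ε / max R 1) * max R 1 :=
              mul_le_mul (le_of_lt htlt) hzn (norm_nonneg _) (by positivity)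
          _ = ε := by field_simp
      have : ‖x‖ ≤ 0 := le_of_forall_pos_le_add (by
        intro ε hε; simpa using hnorm ε hε)
      simpa using le_antisymm this (norm_nonneg x)
    rw [← h0g, hx0]
    rw [zero_smul_set ⟨0, h0⟩]
    exact rfl
  · -- gauge > 0
    have hgne : gauge X x ≠ 0 := ne_of_gt h0g
    have hmem : (gauge X x)⁻¹ • x ∈ X := by
      have hclS : closure S ⊆ {t : ℝ | t ≠ 0} := by
        intro t ht
        have h1 : closure S ⊆ Ici (sInf S) :=
          closure_minimal (fun r hr => csInf_le hSbdd hr) isClosed_Ici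
        have := h1 ht
        simp only [mem_Ici] at this
        have : 0 < t := lt_of_lt_of_le (hg ▸ h0g) this
        exact ne_of_gt this
      have hcont : ContinuousOn (fun t : ℝ => t⁻¹ • x) (closure S) :=
        ((continuousOn_inv₀.mono (fun t ht => by simp only [mem_compl_iff, mem_singleton_iff]; exact hclS ht)).smul continuousOn_const)
      have hgS : gauge X x ∈ closure S := hg ▸ csInf_mem_closure hSne hSbdd
      have himg : (fun t : ℝ => t⁻¹ • x) '' S ⊆ X := by
        rintro _ ⟨t, htS, rfl⟩
        obtain ⟨z, hz, hzx⟩ := htS.2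
        have : t ≠ 0 := ne_of_gt htS.1
        simp only [← hzx, inv_smul_smul₀ this]
        exact hz
      have : (fun t : ℝ => t⁻¹ • x) (gauge X x) ∈ closure ((fun t : ℝ => t⁻¹ • x) '' S) :=
        hcont.image_closure ⟨_, hgS, rfl⟩
      have := closure_mono himg this
      rwa [hXc.closure_eq] at this
    exact ⟨_, hmem, smul_inv_smul₀ hgne x⟩

lemma gauge_combo' {X : Set E} (hXc : IsClosed X) (hXb : Bornology.IsBounded X)
    (hconv : Convex ℝ X) (h0 : (0:E) ∈ X) {x₁ x₂ : E} (h1 : x₁ ∈ X) (h2 : x₂ ∈ X)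
    {a b : ℝ} (ha : 0 ≤ a) (hb : 0 ≤ b) :
    gauge X (a • x₁ + b • x₂) ≤ a * gauge X x₁ + b * gauge X x₂ := by
  have m1 := gauge_attained' hXc hXb h0 h1
  have m2 := gauge_attained' hXc hXb h0 h2
  have hg1 := gauge_nonneg (s := X) x₁
  have hg2 := gauge_nonneg (s := X) x₂
  have hmem : a • x₁ + b • x₂ ∈ (a * gauge X x₁) • X + (b * gauge X x₂) • X :=
    Set.add_mem_add (by rw [mul_smul]; exact Set.smul_mem_smul_set m1)
      (by rw [mul_smul]; exact Set.smul_mem_smul_set m2)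
  rw [← hconv.add_smul (by positivity) (by positivity)] at hmem
  exact gauge_le_of_mem (by positivity) hmem

lemma exists_antilip {nx nu : ℕ} (B : Matrix (Fin nx) (Fin nu) ℝ)
    (hinj : Function.Injective B.mulVecLin) :
    ∃ m > (0:ℝ), ∀ v : Fin nu → ℝ, m * ‖v‖ ≤ ‖B *ᵥ v‖ := by
  rcases Nat.eq_zero_or_pos nu with h0 | hpos
  · subst h0
    refine ⟨1, one_pos, fun v => ?_⟩
    have : v = 0 := Subsingleton.elim v 0
    simp [this, Matrix.mulVec_zero]
  · haveI : Nontrivial (Fin nu → ℝ) :=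
      ⟨⟨0, Function.const _ 1, by
        intro h
        have := congrFun h ⟨0, hpos⟩
        simpa using this.symm⟩⟩
    obtain ⟨x1, hx1⟩ := exists_norm_eq (Fin nu → ℝ) (zero_le_one)
    have hsne : (Metric.sphere (0 : Fin nu → ℝ) 1).Nonempty :=
      ⟨x1, by simp [hx1]⟩
    have hcont : Continuous fun v : Fin nu → ℝ => ‖B *ᵥ v‖ := by
      have h1 : Continuous fun v : Fin nu → ℝ => B.mulVecLin v :=
        B.mulVecLin.continuous_of_finiteDimensional
      simpa [Matrix.mulVecLin_apply] using h1.norm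
    obtain ⟨v₀, hv₀s, hv₀min⟩ := (isCompact_sphere (0 : Fin nu → ℝ) 1).exists_isMinOn
      hsne hcont.continuousOn
    have hv₀norm : ‖v₀‖ = 1 := by simpa using hv₀s
    have hv₀ne : v₀ ≠ 0 := by
      intro h; rw [h] at hv₀norm; simp at hv₀norm
    have hm : 0 < ‖B *ᵥ v₀‖ := by
      rw [norm_pos_iff]
      have : B.mulVecLin v₀ ≠ B.mulVecLin 0 := fun h => hv₀ne (hinj h)
      simpa [Matrix.mulVecLin_apply, Matrix.mulVec_zero] using this
    refine ⟨‖B *ᵥ v₀‖, hm, fun v => ?_⟩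
    rcases eq_or_ne v 0 with rfl | hv
    · simp [Matrix.mulVec_zero]
    · have hvn : ‖v‖ ≠ 0 := norm_ne_zero_iff.mpr hv
      have hvpos : 0 < ‖v‖ := norm_pos_iff.mpr hv
      set w := ‖v‖⁻¹ • v with hw
      have hwn : ‖w‖ = 1 := by
        rw [hw, norm_smul]; simp [abs_of_nonneg (inv_nonneg.mpr (norm_nonneg v)),
          inv_mul_cancel₀ hvn]
      have hmin := hv₀min (show w ∈ Metric.sphere (0 : Fin nu → ℝ) 1 by simp [hwn])
      have hBw : ‖B *ᵥ w‖ = ‖v‖⁻¹ * ‖B *ᵥ v‖ := by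
        rw [hw, Matrix.mulVec_smul, norm_smul]
        simp [abs_of_nonneg (inv_nonneg.mpr (norm_nonneg v))]
      simp only [IsMinOn, IsMinFilter, Set.mem_setOf_eq] at hmin
      rw [hBw] at hmin
      calc ‖B *ᵥ v₀‖ * ‖v‖ ≤ (‖v‖⁻¹ * ‖B *ᵥ v‖) * ‖v‖ :=
            mul_le_mul_of_nonneg_right hmin (norm_nonneg v)
        _ = ‖B *ᵥ v‖ := by field_simp

end HelperLemmas

section HelperLemmas2


lemma rank_inj' {nx nu : ℕ} (B : Matrix (Fin nx) (Fin nu) ℝ) (hB : B.rank = nu) :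
    Function.Injective B.mulVecLin := by
  rw [← LinearMap.ker_eq_bot]
  have h1 := LinearMap.finrank_range_add_finrank_ker B.mulVecLin
  have h2 : Module.finrank ℝ (Fin nu → ℝ) = nu := by simp
  have h3 : Module.finrank ℝ (LinearMap.range B.mulVecLin) = nu := hB
  rw [h2, h3] at h1
  have h4 : Module.finrank ℝ (LinearMap.ker B.mulVecLin) = 0 := by omega
  exact Submodule.finrank_eq_zero.mp h4

lemma scale_subset {E : Type*} [NormedAddCommGroup E] [NormedSpace ℝ E]
    {X : Set E} (hconv : Convex ℝ X) (h0 : (0:E) ∈ X) {s t : ℝ}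
    (hs : 0 ≤ s) (hst : s ≤ t) : s • X ⊆ t • X := by
  rcases eq_or_lt_of_le (hs.trans hst) with h | htpos
  · have : s = 0 := le_antisymm (hst.trans h.symm.le) hs
    rw [this, ← h]
  · rintro _ ⟨z, hz, rfl⟩
    refine ⟨(s / t) • z, ?_, ?_⟩
    · have hmem := hconv hz h0 (show (0:ℝ) ≤ s / t by positivity)
        (show (0:ℝ) ≤ 1 - s / t by
          rw [sub_nonneg]; exact div_le_one_of_le₀ hst (le_of_lt htpos))
        (by ring)
      simpa using hmem
    · show t • ((s / t) • z) = s • z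
      rw [smul_smul]
      congr 1
      field_simp

end HelperLemmas2

/-- non-emptiness of `ℳ(X)` in the proof of Lemma 1: there
exists at least one `L`-CLF with domain `X`. -/
theorem stmt_13 {nx nu : ℕ}
    (A : Matrix (Fin nx) (Fin nx) ℝ) (B : Matrix (Fin nx) (Fin nu) ℝ)
    (𝕏 : Set (Fin nx → ℝ)) (𝕌 : Set (Fin nu → ℝ))
    (hXcl : IsClosed 𝕏) (hXcv : Convex ℝ 𝕏)
    (hUcl : IsClosed 𝕌) (hUcv : Convex ℝ 𝕌)
    (h0X : (0 : Fin nx → ℝ) ∈ 𝕏) (h0U : (0 : Fin nu → ℝ) ∈ 𝕌)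
    (hB : B.rank = nu) (hnu : nu ≤ nx)
    (L : (Fin nx → ℝ) → (Fin nu → ℝ) → ℝ)
    (hLcv : ConvexOn ℝ Set.univ (fun p : (Fin nx → ℝ) × (Fin nu → ℝ) => L p.1 p.2))
    (hLnn : ∀ x u, 0 ≤ L x u) (hL0 : L 0 0 = 0)
    (hLpd : ∀ x u, ¬(x = 0 ∧ u = 0) → 0 < L x u)
    (X : Set (Fin nx → ℝ)) (hXsub : X ⊆ 𝕏) (hXcomp : IsCompact X)
    (hXcv2 : Convex ℝ X) (h0 : (0 : Fin nx → ℝ) ∈ X)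
    (lam : ℝ) (hlam0 : 0 ≤ lam) (hlam1 : lam < 1)
    (hCI : ∀ x ∈ X, ∃ u ∈ 𝕌, A *ᵥ x + B *ᵥ u ∈ lam • X) :
    ∃ M : (Fin nx → ℝ) → EReal, IsLCLF A B 𝕏 𝕌 L M ∧ domF M = X := by
  have hXclosed : IsClosed X := hXcomp.isClosed
  have hXb : Bornology.IsBounded X := hXcomp.isBounded
  obtain ⟨R₀, hR₀⟩ := hXb.subset_closedBall 0
  set R : ℝ := max R₀ 0 with hRdef
  have hRnn : 0 ≤ R := le_max_right _ _
  have hR : ∀ z ∈ X, ‖z‖ ≤ R := by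
    intro z hz
    have := hR₀ hz
    simp only [Metric.mem_closedBall, dist_zero_right] at this
    exact this.trans (le_max_left _ _)
  set Acl : (Fin nx → ℝ) →L[ℝ] (Fin nx → ℝ) :=
    LinearMap.toContinuousLinearMap A.mulVecLin with hAcl
  have hAbd : ∀ z, ‖A *ᵥ z‖ ≤ ‖Acl‖ * ‖z‖ := by
    intro z
    have := Acl.le_opNorm z
    simpa [hAcl, LinearMap.coe_toContinuousLinearMap', Matrix.mulVecLin_apply] using this
  obtain ⟨m, hm, hmB⟩ := exists_antilip B (rank_inj' B hB)
  set r : ℝ := (lam * R + ‖Acl‖ * R) / m with hrdef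
  have hrnn : 0 ≤ r :=
    div_nonneg (add_nonneg (mul_nonneg hlam0 hRnn) (mul_nonneg (norm_nonneg _) hRnn)) hm.le
  have hLcont : Continuous (fun p : (Fin nx → ℝ) × (Fin nu → ℝ) => L p.1 p.2) := by
    rw [← continuousOn_univ]
    exact hLcv.continuousOn isOpen_univ
  obtain ⟨p₀, hp₀mem, hp₀max⟩ :=
    (hXcomp.prod (isCompact_closedBall (0 : Fin nu → ℝ) r)).exists_isMaxOn
      ⟨(0, 0), Set.mk_mem_prod h0 (Metric.mem_closedBall_self hrnn)⟩ hLcont.continuousOn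
  set K : ℝ := L p₀.1 p₀.2 with hKdef
  have hK : ∀ x' ∈ X, ∀ u' ∈ Metric.closedBall (0 : Fin nu → ℝ) r, L x' u' ≤ K := by
    intro x' hx' u' hu'
    exact hp₀max (Set.mk_mem_prod hx' hu')
  have hKnn : 0 ≤ K := by
    have := hp₀max (Set.mk_mem_prod h0 (Metric.mem_closedBall_self hrnn))
    simpa [hL0] using this
  set c : ℝ := (K + 1) / (1 - lam) with hcdef
  have hlam' : 0 < 1 - lam := by linarith
  have hc : 0 < c := by positivity
  have hclam : c * (1 - lam) = K + 1 := by
    rw [hcdef]; field_simp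
  have hgz : ∀ x ∈ X, gauge X x = 0 → x = 0 := by
    intro x hx hgx
    have h1 := gauge_attained' hXclosed hXb h0 hx
    rw [hgx, zero_smul_set ⟨0, h0⟩] at h1
    exact h1
  have hgle1 : ∀ x ∈ X, gauge X x ≤ 1 := fun x hx => gauge_le_one_of_mem hx
  set M : (Fin nx → ℝ) → EReal :=
    fun x => if x ∈ X then ((c * gauge X x : ℝ) : EReal) else ⊤ with hM
  have hMval : ∀ x ∈ X, M x = ((c * gauge X x : ℝ) : EReal) := fun x hx => by simp [hM, hx]
  have hMtop : ∀ x ∉ X, M x = ⊤ := fun x hx => by simp [hM, hx]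
  have hM0 : M 0 = 0 := by
    rw [hMval 0 h0, gauge_zero, mul_zero]
    rfl
  have hdom : domF M = X := by
    ext x
    by_cases hx : x ∈ X
    · simp only [domF, mem_setOf_eq, hMval x hx, hx, iff_true]
      exact EReal.coe_lt_top _
    · simp [domF, hMtop x hx, hx]
  have hepi : epiF M = {p : (Fin nx → ℝ) × ℝ | p.1 ∈ X ∧ c * gauge X p.1 ≤ p.2} := by
    ext p
    by_cases hx : p.1 ∈ X
    · simp only [epiF, mem_setOf_eq, hMval _ hx, EReal.coe_le_coe_iff, hx, true_and]
    · simp only [epiF, mem_setOf_eq, hMtop _ hx, hx, false_and, iff_false]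
      exact fun h => (EReal.coe_ne_top p.2) (top_le_iff.mp h)
  refine ⟨M, ⟨hM0, ?_, ⟨?_, ?_, ?_, ?_, ?_⟩, ?_⟩, hdom⟩
  · -- positive definite
    intro x hx0
    by_cases hx : x ∈ X
    · rw [hMval x hx]
      have hgpos : 0 < gauge X x :=
        lt_of_le_of_ne (gauge_nonneg x) (fun h => hx0 (hgz x hx h.symm))
      have h1 : (0:ℝ) < c * gauge X x := by positivity
      exact_mod_cast h1
    · rw [hMtop x hx]
      exact EReal.zero_lt_top
  · -- never bot
    intro x
    by_cases hx : x ∈ X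
    · rw [hMval x hx]; exact EReal.coe_ne_bot _
    · rw [hMtop x hx]; exact top_ne_bot
  · rw [hdom]; exact ⟨0, h0⟩
  · rw [hdom]; exact hXcomp
  · -- closed epigraph
    have hcont : Continuous fun q : (Fin nx → ℝ) × ℝ => ((q.2 / c) • q.1, q.2) :=
      ((continuous_snd.div_const c).smul continuous_fst).prodMk continuous_snd
    have hS1 : IsClosed ((fun q : (Fin nx → ℝ) × ℝ => ((q.2 / c) • q.1, q.2)) ''
        (X ×ˢ Icc 0 c)) :=
      (((hXcomp.prod isCompact_Icc).image hcont)).isClosed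
    have hS2 : IsClosed (X ×ˢ Ici c) := hXclosed.prod isClosed_Ici
    have hcover : epiF M = ((fun q : (Fin nx → ℝ) × ℝ => ((q.2 / c) • q.1, q.2)) ''
        (X ×ˢ Icc 0 c)) ∪ (X ×ˢ Ici c) := by
      rw [hepi]
      ext p
      constructor
      · rintro ⟨hpX, hple⟩
        by_cases hyc : c ≤ p.2
        · exact Or.inr (Set.mk_mem_prod hpX hyc)
        · left
          push_neg at hyc
          have hgnn := gauge_nonneg (s := X) p.1
          have hy0 : 0 ≤ p.2 := le_trans (by positivity) hple
          have hgle : gauge X p.1 ≤ p.2 / c := by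
            rw [le_div_iff₀ hc]; linarith [hple]
          have hmem : p.1 ∈ (p.2 / c) • X := by
            have h1 := gauge_attained' hXclosed hXb h0 hpX
            exact scale_subset hXcv2 h0 hgnn hgle h1
          obtain ⟨z, hz, hzp⟩ := hmem
          have hzp2 : (p.2 / c) • z = p.1 := hzp
          exact ⟨(z, p.2), Set.mk_mem_prod hz ⟨hy0, hyc.le⟩, by
            simp only [Prod.ext_iff]; exact ⟨hzp2, by trivial⟩⟩
      · rintro (⟨q, hq, rfl⟩ | ⟨hpX, hpc⟩)
        · have hqX := hq.1
          have hq0 := hq.2.1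
          have hqc := hq.2.2
          have hdnn : 0 ≤ q.2 / c := div_nonneg hq0 hc.le
          have hd1 : q.2 / c ≤ 1 := div_le_one_of_le₀ hqc hc.le
          have hmem : (q.2 / c) • q.1 ∈ (q.2 / c) • X := Set.smul_mem_smul_set hqX
          constructor
          · have := scale_subset hXcv2 h0 hdnn hd1 hmem
            simpa using this
          · have hg := gauge_le_of_mem hdnn hmem
            calc c * gauge X ((q.2 / c) • q.1) ≤ c * (q.2 / c) :=
                  mul_le_mul_of_nonneg_left hg hc.le
              _ = q.2 := by field_simp
        · exact ⟨hpX, by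
            have := hgle1 p.1 hpX
            calc c * gauge X p.1 ≤ c * 1 := mul_le_mul_of_nonneg_left this hc.le
              _ = c := mul_one c
              _ ≤ p.2 := hpc⟩
    rw [hcover]
    exact hS1.union hS2
  · -- convex epigraph
    rw [hepi]
    intro p hp q hq a b ha hb hab
    simp only [mem_setOf_eq, Prod.fst_add, Prod.snd_add, Prod.smul_fst, Prod.smul_snd,
      smul_eq_mul] at *
    constructor
    · exact hXcv2 hp.1 hq.1 ha hb hab
    · have hcg := gauge_combo' hXclosed hXb hXcv2 h0 hp.1 hq.1 ha hb
      have h1 : c * gauge X (a • p.1 + b • q.1) ≤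
          c * (a * gauge X p.1 + b * gauge X q.1) :=
        mul_le_mul_of_nonneg_left hcg hc.le
      have h2 : a * (c * gauge X p.1) ≤ a * p.2 := mul_le_mul_of_nonneg_left hp.2 ha
      have h3 : b * (c * gauge X q.1) ≤ b * q.2 := mul_le_mul_of_nonneg_left hq.2 hb
      nlinarith
  · -- CLF inequality
    intro x
    by_cases hx : x ∈ X
    swap
    · rw [hMtop x hx]; exact le_top
    rcases eq_or_ne x 0 with rfl | hx0
    · refine le_trans (iInf₂_le 0 h0U) ?_
      have h1 : A *ᵥ (0 : Fin nx → ℝ) + B *ᵥ (0 : Fin nu → ℝ) = 0 := by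
        simp [Matrix.mulVec_zero]
      rw [h1, hL0, hM0]
      simp [indE, h0X]
    · set g : ℝ := gauge X x with hgdef
      have hgpos : 0 < g :=
        lt_of_le_of_ne (gauge_nonneg x) (fun h => hx0 (hgz x hx h.symm))
      have hg1 : g ≤ 1 := hgle1 x hx
      obtain ⟨x', hx'X, hxx0⟩ := gauge_attained' hXclosed hXb h0 hx
      have hxx' : g • x' = x := hxx0
      obtain ⟨u', hu'U, hinvv⟩ := hCI x' hx'X
      obtain ⟨w, hwX, hww0⟩ := hinvv
      have hww : lam • w = A *ᵥ x' + B *ᵥ u' := hww0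
      have hu'bd : ‖u'‖ ≤ r := by
        have hBu : B *ᵥ u' = lam • w - A *ᵥ x' := eq_sub_of_add_eq' hww.symm
        have h1 : ‖B *ᵥ u'‖ ≤ lam * R + ‖Acl‖ * R := by
          rw [hBu]
          have e1 : ‖lam • w‖ ≤ lam * R := by
            rw [norm_smul, Real.norm_of_nonneg hlam0]
            exact mul_le_mul_of_nonneg_left (hR w hwX) hlam0
          have e2 : ‖A *ᵥ x'‖ ≤ ‖Acl‖ * R :=
            le_trans (hAbd x') (mul_le_mul_of_nonneg_left (hR x' hx'X) (norm_nonneg _))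
          calc ‖lam • w - A *ᵥ x'‖ ≤ ‖lam • w‖ + ‖A *ᵥ x'‖ := norm_sub_le _ _
            _ ≤ lam * R + ‖Acl‖ * R := by linarith
        rw [hrdef, le_div_iff₀ hm]
        calc ‖u'‖ * m = m * ‖u'‖ := mul_comm _ _
          _ ≤ ‖B *ᵥ u'‖ := hmB u'
          _ ≤ lam * R + ‖Acl‖ * R := h1
      have hLK : L x' u' ≤ K := hK x' hx'X u'
        (by simpa [Metric.mem_closedBall, dist_zero_right] using hu'bd)
      set u : Fin nu → ℝ := g • u' with hudef
      have huU : u ∈ 𝕌 := by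
        have := hUcv hu'U h0U hgpos.le (show (0:ℝ) ≤ 1 - g by linarith) (by ring)
        simpa [hudef] using this
      have hAB : A *ᵥ x + B *ᵥ u = (g * lam) • w := by
        rw [← hxx', hudef, Matrix.mulVec_smul, Matrix.mulVec_smul, ← smul_add, ← hww, smul_smul]
      have htlam : 0 ≤ g * lam := mul_nonneg hgpos.le hlam0
      have htlam1 : g * lam ≤ 1 := by nlinarith
      have hABX : (g * lam) • w ∈ X := by
        have := hXcv2 hwX h0 htlam (show (0:ℝ) ≤ 1 - g * lam by linarith) (by ring)
        simpa using this
      have hABg : gauge X ((g * lam) • w) ≤ g * lam :=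
        gauge_le_of_mem htlam (Set.smul_mem_smul_set hwX)
      have hLxu : L x u ≤ g * K := by
        have hcomb := hLcv.2 (mem_univ ((x', u') : (Fin nx → ℝ) × (Fin nu → ℝ)))
          (mem_univ ((0, 0) : (Fin nx → ℝ) × (Fin nu → ℝ)))
          hgpos.le (show (0:ℝ) ≤ 1 - g by linarith) (by ring)
        have heq : g • ((x', u') : (Fin nx → ℝ) × (Fin nu → ℝ)) +
            (1 - g) • ((0, 0) : (Fin nx → ℝ) × (Fin nu → ℝ)) = (x, u) := by
          simp [Prod.ext_iff, hxx', hudef]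
        rw [heq] at hcomb
        simp only [hL0, mul_zero, add_zero] at hcomb
        have h2 : g * L x' u' ≤ g * K := mul_le_mul_of_nonneg_left hLK hgpos.le
        calc L x u ≤ g * L x' u' := by simpa using hcomb
          _ ≤ g * K := h2
      refine le_trans (iInf₂_le u huU) ?_
      have hind : indE 𝕏 x = 0 := by simp [indE, hXsub hx]
      rw [hMval x hx, hAB, hMval _ hABX, hind, add_zero, ← EReal.coe_add,
        EReal.coe_le_coe_iff]
      have h5 : c * gauge X ((g * lam) • w) ≤ c * (g * lam) :=
        mul_le_mul_of_nonneg_left hABg hc.le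
      have h7 : L x u + c * gauge X ((g * lam) • w) ≤ g * K + c * (g * lam) :=
        add_le_add hLxu h5
      have h8 : g * K ≤ g * (K + 1) :=
        mul_le_mul_of_nonneg_left (by linarith) hgpos.le
      have h9 : c * g = c * (g * lam) + g * (c * (1 - lam)) := by ring
      rw [hclam] at h9
      linarith
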